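/- (Matsumoto's hyperdeterminantal Binet–Cauchy formula, ordered form.) Let μ be a sigma-finite Borel measure on ℝ, let m, n be positive integers, and let φ_{k,r} : ℝ → ℂ, for 1 ≤ k ≤ 2m and 1 ≤ r ≤ n, be measurable functions such that for every tuple (r_1,…,r_{2m}) ∈ {1,…,n}^{2m} the function x ↦ ∏_{k=1}^{2m} φ_{k,r_k}(x) is integrable with respect to μ. Define A(r_1,…,r_{2m}) = ∫_ℝ ∏_{k=1}^{2m} φ_{k,r_k}(x) dμ(x). Then Det(A) = ∫_{{(x_1,…,x_n) ∈ ℝ^n : x_1 > x_2 > ⋯ > x_n}} ∏_{k=1}^{2m} det( φ_{k,r}(x_s) )_{1≤r,s≤n} dμ(x_1)⋯dμ(x_n). -/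

import Mathlib

open scoped BigOperators
open MeasureTheory

/-- Cayley's first hyperdeterminant of a `2m`-dimensional array of size `n` in each direction. -/
noncomputable def hyperDet (m n : ℕ) (A : (Fin (2 * m) → Fin n) → ℂ) : ℂ :=
  ((n.factorial : ℕ) : ℂ)⁻¹ *
    ∑ σ : Fin (2 * m) → Equiv.Perm (Fin n),
      (∏ k : Fin (2 * m), ((Equiv.Perm.sign (σ k) : ℤ) : ℂ)) *
        ∏ j : Fin n, A (fun k => σ k j)

lemma aux_int_prod (μ : Measure ℝ) [SigmaFinite μ] (n : ℕ) (f : Fin n → ℝ → ℂ) :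
    ∫ x : Fin n → ℝ, ∏ i, f i (x i) ∂(Measure.pi fun _ => μ) = ∏ i, ∫ x, f i x ∂μ := by
  letI : MeasureSpace ℝ := ⟨μ⟩
  haveI : SigmaFinite (volume : Measure ℝ) := ‹SigmaFinite μ›
  exact MeasureTheory.integral_fintype_prod_volume_eq_prod f

lemma aux_integrable (μ : Measure ℝ) [SigmaFinite μ] (n : ℕ) (f : Fin n → ℝ → ℂ)
    (hf : ∀ i, Integrable (f i) μ) :
    Integrable (fun x : Fin n → ℝ => ∏ i, f i (x i)) (Measure.pi fun _ => μ) := by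
  letI : MeasureSpace ℝ := ⟨μ⟩
  haveI : SigmaFinite (volume : Measure ℝ) := ‹SigmaFinite μ›
  exact Integrable.fintype_prod hf

lemma det_prod_expand (m n : ℕ) (φ : Fin (2 * m) → Fin n → ℝ → ℂ) (x : Fin n → ℝ) :
    (∏ k : Fin (2 * m), Matrix.det (Matrix.of fun r s : Fin n => φ k r (x s))) =
    ∑ σ : Fin (2 * m) → Equiv.Perm (Fin n),
      (∏ k : Fin (2 * m), ((Equiv.Perm.sign (σ k) : ℤ) : ℂ)) *
        ∏ j : Fin n, ∏ k : Fin (2 * m), φ k (σ k j) (x j) := by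
  simp_rw [Matrix.det_apply']
  rw [Fintype.prod_sum]
  refine Finset.sum_congr rfl fun σ _ => ?_
  rw [Finset.prod_mul_distrib]
  congr 1
  rw [Finset.prod_comm]
  rfl

lemma prod_det_perm (m n : ℕ) (φ : Fin (2 * m) → Fin n → ℝ → ℂ) (x : Fin n → ℝ)
    (π : Equiv.Perm (Fin n)) :
    (∏ k : Fin (2 * m), Matrix.det (Matrix.of fun r s : Fin n => φ k r (x (π s)))) =
    ∏ k : Fin (2 * m), Matrix.det (Matrix.of fun r s : Fin n => φ k r (x s)) := by
  have h : ∀ k : Fin (2 * m), Matrix.det (Matrix.of fun r s : Fin n => φ k r (x (π s)))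
      = ((Equiv.Perm.sign π : ℤ) : ℂ) * Matrix.det (Matrix.of fun r s : Fin n => φ k r (x s)) := by
    intro k
    rw [show (Matrix.of fun r s : Fin n => φ k r (x (π s)))
        = (Matrix.of fun r s : Fin n => φ k r (x s)).submatrix id π from rfl,
      Matrix.det_permute']
  simp_rw [h]
  rw [Finset.prod_mul_distrib, Finset.prod_const, Finset.card_univ, Fintype.card_fin]
  rcases Int.units_eq_one_or (Equiv.Perm.sign π) with hs | hs <;>
    simp [hs, pow_mul]

/-- Matsumoto's hyperdeterminantal Binet–Cauchy formula, ordered form: the integral is taken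
over the fundamental Weyl chamber `x₁ > x₂ > ⋯ > xₙ`. -/
theorem hyperDet_binet_cauchy_ordered (m n : ℕ) (hm : 0 < m) (hn : 0 < n)
    (μ : Measure ℝ) [SigmaFinite μ]
    (φ : Fin (2 * m) → Fin n → ℝ → ℂ)
    (hmeas : ∀ k r, Measurable (φ k r))
    (hint : ∀ r : Fin (2 * m) → Fin n, Integrable (fun x => ∏ k : Fin (2 * m), φ k (r k) x) μ) :
    hyperDet m n (fun r => ∫ x, ∏ k : Fin (2 * m), φ k (r k) x ∂μ) =
      ∫ x in {y : Fin n → ℝ | StrictAnti y},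
        ∏ k : Fin (2 * m), Matrix.det (Matrix.of fun r s : Fin n => φ k r (x s))
        ∂(Measure.pi fun _ => μ) := by
  classical
  set ν : Measure (Fin n → ℝ) := Measure.pi fun _ => μ with hν
  set F : (Fin n → ℝ) → ℂ :=
    fun x => ∏ k : Fin (2 * m), Matrix.det (Matrix.of fun r s : Fin n => φ k r (x s)) with hFdef
  set S : Equiv.Perm (Fin n) → Set (Fin n → ℝ) :=
    fun τ => {x | StrictAnti fun i => x (τ i)} with hSdef
  -- measurability of the chamber sets
  have hSm : ∀ τ, MeasurableSet (S τ) := by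
    intro τ
    have : S τ = ⋂ (p : Fin n × Fin n) (_ : p.1 < p.2), {x : Fin n → ℝ | x (τ p.2) < x (τ p.1)} := by
      ext x
      simp only [hSdef, Set.mem_setOf_eq, Set.mem_iInter]
      exact ⟨fun h p hp => h hp, fun h a b hab => h (a, b) hab⟩
    rw [this]
    exact MeasurableSet.iInter fun p => MeasurableSet.iInter fun _ =>
      measurableSet_lt (measurable_pi_apply _) (measurable_pi_apply _)
  -- each chamber set consists of injective tuples
  have hSinj : ∀ τ, ∀ x ∈ S τ, Function.Injective x := by
    intro τ x hx a b hab
    have h3 : (fun i => x (τ i)) (τ.symm a) = (fun i => x (τ i)) (τ.symm b) := by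
      simpa using hab
    have := hx.injective h3
    simpa using congrArg τ this
  -- disjointness
  have hdisj : Pairwise (Function.onFun Disjoint S) := by
    intro τ τ' hne
    rw [Function.onFun, Set.disjoint_left]
    intro x hx hx'
    apply hne
    have hxinj : Function.Injective x := hSinj τ x hx
    have hrev : StrictAnti (Fin.rev : Fin n → Fin n) := fun a b h => Fin.rev_lt_rev.mpr h
    have hm1 : Monotone (x ∘ ⇑(Fin.revPerm.trans τ)) := by
      have : StrictMono ((fun i => x (τ i)) ∘ Fin.rev) := StrictAnti.comp hx hrev
      exact this.monotone
    have hm2 : Monotone (x ∘ ⇑(Fin.revPerm.trans τ')) := by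
      have : StrictMono ((fun i => x (τ' i)) ∘ Fin.rev) := StrictAnti.comp hx' hrev
      exact this.monotone
    have heq := Tuple.unique_monotone hm1 hm2
    refine Equiv.ext fun i => ?_
    have := congrFun heq (Fin.rev i)
    simp only [Function.comp_apply, Equiv.trans_apply] at this
    have h5 : x (τ i) = x (τ' i) := by
      simpa [Fin.rev_rev] using this
    exact hxinj h5
  -- the union of the chambers is the set of injective tuples
  have hcover : ∀ x : Fin n → ℝ, Function.Injective x → ∃ τ, x ∈ S τ := by
    intro x hx
    refine ⟨Fin.revPerm.trans (Tuple.sort x), ?_⟩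
    have hmono : Monotone (x ∘ ⇑(Tuple.sort x)) := Tuple.monotone_sort x
    have hsm : StrictMono (x ∘ ⇑(Tuple.sort x)) :=
      hmono.strictMono_of_injective (hx.comp (Equiv.injective _))
    have hrev : StrictAnti (Fin.rev : Fin n → Fin n) := fun a b h => Fin.rev_lt_rev.mpr h
    have : StrictAnti ((x ∘ ⇑(Tuple.sort x)) ∘ Fin.rev) := StrictMono.comp_strictAnti hsm hrev
    exact this
  -- F vanishes on non-injective tuples
  have hvanish : ∀ x : Fin n → ℝ, ¬ Function.Injective x → F x = 0 := by
    intro x hx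
    obtain ⟨a, b, hab, hne⟩ := Function.not_injective_iff.mp hx
    refine Finset.prod_eq_zero (Finset.mem_univ (⟨0, by omega⟩ : Fin (2 * m))) ?_
    exact Matrix.det_zero_of_column_eq hne fun r => by simp [hab]
  -- integrability of F
  have hFint : Integrable F ν := by
    have hrep : F = fun x => ∑ σ : Fin (2 * m) → Equiv.Perm (Fin n),
        (∏ k : Fin (2 * m), ((Equiv.Perm.sign (σ k) : ℤ) : ℂ)) *
          ∏ j : Fin n, ∏ k : Fin (2 * m), φ k (σ k j) (x j) :=
      funext fun x => det_prod_expand m n φ x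
    rw [hrep]
    exact integrable_finset_sum _ fun σ _ =>
      ((aux_integrable μ n (fun j t => ∏ k : Fin (2 * m), φ k (σ k j) t)
        (fun j => hint fun k => σ k j)).const_mul _)
  -- step 1: hyperDet equals (n!)⁻¹ times the full integral of F
  have step1 : hyperDet m n (fun r => ∫ x, ∏ k : Fin (2 * m), φ k (r k) x ∂μ)
      = ((n.factorial : ℕ) : ℂ)⁻¹ * ∫ x, F x ∂ν := by
    rw [hyperDet]
    congr 1
    calc
      ∑ σ : Fin (2 * m) → Equiv.Perm (Fin n),
          (∏ k : Fin (2 * m), ((Equiv.Perm.sign (σ k) : ℤ) : ℂ)) *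
            ∏ j : Fin n, ∫ x, ∏ k : Fin (2 * m), φ k (σ k j) x ∂μ
        = ∑ σ : Fin (2 * m) → Equiv.Perm (Fin n),
            (∏ k : Fin (2 * m), ((Equiv.Perm.sign (σ k) : ℤ) : ℂ)) *
              ∫ x : Fin n → ℝ, ∏ j : Fin n, ∏ k : Fin (2 * m), φ k (σ k j) (x j) ∂ν := by
          refine Finset.sum_congr rfl fun σ _ => ?_
          rw [aux_int_prod μ n (fun j t => ∏ k : Fin (2 * m), φ k (σ k j) t)]
      _ = ∑ σ : Fin (2 * m) → Equiv.Perm (Fin n),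
            ∫ x : Fin n → ℝ, (∏ k : Fin (2 * m), ((Equiv.Perm.sign (σ k) : ℤ) : ℂ)) *
              ∏ j : Fin n, ∏ k : Fin (2 * m), φ k (σ k j) (x j) ∂ν := by
          simp_rw [MeasureTheory.integral_const_mul]
      _ = ∫ x : Fin n → ℝ, ∑ σ : Fin (2 * m) → Equiv.Perm (Fin n),
            (∏ k : Fin (2 * m), ((Equiv.Perm.sign (σ k) : ℤ) : ℂ)) *
              ∏ j : Fin n, ∏ k : Fin (2 * m), φ k (σ k j) (x j) ∂ν := by
          rw [MeasureTheory.integral_finset_sum]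
          intro σ _
          exact ((aux_integrable μ n (fun j t => ∏ k : Fin (2 * m), φ k (σ k j) t)
            (fun j => hint fun k => σ k j)).const_mul _)
      _ = ∫ x, F x ∂ν := by
          refine integral_congr_ae (Filter.Eventually.of_forall fun x => ?_)
          exact (det_prod_expand m n φ x).symm
  -- step 2: restrict to the union of chambers and decompose
  have hzero : ∀ x ∉ ⋃ τ, S τ, F x = 0 := by
    intro x hx
    refine hvanish x fun hinj => ?_
    obtain ⟨τ, hτ⟩ := hcover x hinj
    exact hx (Set.mem_iUnion.mpr ⟨τ, hτ⟩)
  have step2 : ∫ x, F x ∂ν = ∑ τ : Equiv.Perm (Fin n), ∫ x in S τ, F x ∂ν := by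
    have h1 : ∫ x, F x ∂ν = ∫ x, Set.indicator (⋃ τ, S τ) F x ∂ν := by
      refine integral_congr_ae (Filter.Eventually.of_forall fun x => ?_)
      exact (Set.indicator_apply_eq_self.mpr fun hx => hzero x hx).symm
    rw [h1, MeasureTheory.integral_indicator (MeasurableSet.iUnion hSm),
      MeasureTheory.integral_iUnion hSm hdisj hFint.integrableOn, tsum_fintype]
  -- step 3: each chamber integral equals the fundamental one
  have step3 : ∀ τ : Equiv.Perm (Fin n), ∫ x in S τ, F x ∂ν = ∫ x in S 1, F x ∂ν := by
    intro τ
    have hmp := MeasureTheory.measurePreserving_piCongrLeft (fun _ : Fin n => μ)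
      (τ.symm : Fin n ≃ Fin n)
    set T := MeasurableEquiv.piCongrLeft (fun _ : Fin n => ℝ) (τ.symm : Fin n ≃ Fin n) with hT
    have hTx : ∀ (x : Fin n → ℝ) (i : Fin n), T x (τ.symm (τ i)) = x (τ i) := by
      intro x i
      rw [hT, MeasurableEquiv.coe_piCongrLeft]
      exact Equiv.piCongrLeft_apply_apply (fun _ : Fin n => ℝ) (τ.symm : Fin n ≃ Fin n) x (τ i)
    have hTx' : ∀ (x : Fin n → ℝ) (i : Fin n), T x i = x (τ i) := by
      intro x i
      have := hTx x i
      simpa using this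
    have hpre : T ⁻¹' (S 1) = S τ := by
      ext x
      simp only [Set.mem_preimage, hSdef, Set.mem_setOf_eq]
      have he : (fun i => T x ((1 : Equiv.Perm (Fin n)) i)) = fun i => x (τ i) :=
        funext fun i => by simpa using hTx' x i
      rw [he]
    have hcomp : ∀ x : Fin n → ℝ, F (T x) = F x := by
      intro x
      have hTeq : T x = fun i => x (τ i) := funext (hTx' x)
      rw [hFdef]
      simp only [hTeq]
      exact prod_det_perm m n φ x τ
    have h1 := MeasureTheory.MeasurePreserving.setIntegral_preimage_emb hmp
      (MeasurableEquiv.measurableEmbedding T) F (S 1)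
    rw [hpre] at h1
    simp_rw [hcomp] at h1
    exact h1
  -- conclude
  have hchamber : {y : Fin n → ℝ | StrictAnti y} = S 1 := by
    ext y
    simp only [hSdef, Set.mem_setOf_eq, Equiv.Perm.coe_one, id_eq]
  rw [step1, step2, Finset.sum_congr rfl fun τ _ => step3 τ, Finset.sum_const,
    Finset.card_univ, Fintype.card_perm, Fintype.card_fin, nsmul_eq_mul, ← mul_assoc,
    inv_mul_cancel₀ (by exact_mod_cast Nat.factorial_ne_zero n), one_mul, hchamber]
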